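/- Let X ⊆ ℕ² be a set of ordered pairs, let S ⊆ ℕ be a finite set with |S| = n, and let I ⊆ [n-1] be nonempty with m = max(I) and I⁻ = I \ {m}. Then d_X(I;S) = Σ_{A ⊆ S, |A| = m} d_X(I⁻;A) · d_X(∅;S\A) − d_X(I⁻;S). -/

import Mathlib

open Classical in
/-- The `X`-descent set of a word `w = w₁⋯w_n` (stored 0-indexed as a list), as a subset of
`[n-1] = {1, …, n-1}`: position `i` is an `X`-descent iff `(w_i, w_{i+1}) ∈ X`. -/
noncomputable def XDes (X : Set (ℕ × ℕ)) (w : List ℕ) : Finset ℕ :=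
  (Finset.Icc 1 (w.length - 1)).filter (fun i => (w.getD (i - 1) 0, w.getD i 0) ∈ X)

/-- `dX X I S` is the number of permutations of the finite label set `S ⊆ ℕ` (written in
one-line notation as duplicate-free lists using exactly the labels of `S`) whose
`X`-descent set is exactly `I`. -/
noncomputable def dX (X : Set (ℕ × ℕ)) (I : Finset ℕ) (S : Finset ℕ) : ℕ :=
  Nat.card {w : List ℕ // w.Nodup ∧ w.toFinset = S ∧ XDes X w = I}

/-- `dXn X I n = dX X I [n]` where `[n] = {1, …, n}`. -/
noncomputable def dXn (X : Set (ℕ × ℕ)) (I : Finset ℕ) (n : ℕ) : ℕ :=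
  dX X I (Finset.Icc 1 n)

/-- The finset of words counted by `dX X I S`. -/
noncomputable def Wst (X : Set (ℕ × ℕ)) (I : Finset ℕ) (S : Finset ℕ) : Finset (List ℕ) := by
  classical
  exact (S.toList.permutations).toFinset.filter (fun w => XDes X w = I)

lemma mem_Wst {X : Set (ℕ × ℕ)} {I S : Finset ℕ} {w : List ℕ} :
    w ∈ Wst X I S ↔ w.Nodup ∧ w.toFinset = S ∧ XDes X w = I := by
  classical
  simp only [Wst, Finset.mem_filter, List.mem_toFinset, List.mem_permutations]
  constructor
  · rintro ⟨hp, hx⟩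
    refine ⟨hp.nodup_iff.mpr S.nodup_toList, ?_, hx⟩
    rw [List.toFinset_eq_of_perm _ _ hp, Finset.toList_toFinset]
  · rintro ⟨hn, hts, hx⟩
    refine ⟨List.perm_of_nodup_nodup_toFinset_eq hn S.nodup_toList ?_, hx⟩
    rw [hts, Finset.toList_toFinset]

lemma dX_eq_card (X : Set (ℕ × ℕ)) (I S : Finset ℕ) : dX X I S = (Wst X I S).card := by
  classical
  rw [dX, Nat.card_congr (Equiv.subtypeEquivRight
    (fun w => (mem_Wst (X := X) (I := I) (S := S) (w := w)).symm)),
    Nat.card_eq_fintype_card, Fintype.card_coe]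

lemma mem_XDes {X : Set (ℕ × ℕ)} {w : List ℕ} {i : ℕ} :
    i ∈ XDes X w ↔ (1 ≤ i ∧ i ≤ w.length - 1) ∧ (w.getD (i - 1) 0, w.getD i 0) ∈ X := by
  classical
  rw [XDes, Finset.mem_filter, Finset.mem_Icc]

lemma getD_take {w : List ℕ} {m j : ℕ} (h : j < m) : (w.take m).getD j 0 = w.getD j 0 := by
  simp [List.getD_eq_getElem?_getD, List.getElem?_take, h]

lemma getD_drop (w : List ℕ) (m j : ℕ) : (w.drop m).getD j 0 = w.getD (m + j) 0 := by
  simp [List.getD_eq_getElem?_getD, List.getElem?_drop]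

lemma mem_XDes_take {X : Set (ℕ × ℕ)} {w : List ℕ} {m i : ℕ} (hm : m ≤ w.length) :
    i ∈ XDes X (w.take m) ↔ i ∈ XDes X w ∧ i < m := by
  rw [mem_XDes, mem_XDes, List.length_take]
  constructor
  · rintro ⟨⟨h1, h2⟩, hx⟩
    have hi2 : i < m := by omega
    have hi1 : i - 1 < m := by omega
    rw [getD_take hi1, getD_take hi2] at hx
    exact ⟨⟨⟨h1, by omega⟩, hx⟩, hi2⟩
  · rintro ⟨⟨⟨h1, h2⟩, hx⟩, hlt⟩
    rw [getD_take (show i - 1 < m by omega), getD_take hlt]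
    exact ⟨⟨h1, by omega⟩, hx⟩

lemma mem_XDes_drop {X : Set (ℕ × ℕ)} {w : List ℕ} {m i : ℕ} :
    i ∈ XDes X (w.drop m) ↔ 1 ≤ i ∧ m + i ∈ XDes X w := by
  rw [mem_XDes, mem_XDes, List.length_drop]
  constructor
  · rintro ⟨⟨h1, h2⟩, hx⟩
    rw [getD_drop, getD_drop, show m + (i - 1) = m + i - 1 by omega] at hx
    exact ⟨h1, ⟨by omega, by omega⟩, hx⟩
  · rintro ⟨h1, ⟨h2, h3⟩, hx⟩
    rw [getD_drop, getD_drop, show m + (i - 1) = m + i - 1 by omega]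
    exact ⟨⟨h1, by omega⟩, hx⟩

lemma split_iff (X : Set (ℕ × ℕ)) {m : ℕ} {w : List ℕ} (hm1 : 1 ≤ m) (hmlt : m < w.length)
    {J : Finset ℕ} (hJ : ∀ j ∈ J, j < m) :
    (XDes X (w.take m) = J ∧ XDes X (w.drop m) = ∅) ↔
      (XDes X w = insert m J ∨ XDes X w = J) := by
  constructor
  · rintro ⟨ht, hd⟩
    have hoff : ∀ i, i ≠ m → (i ∈ XDes X w ↔ i ∈ J) := by
      intro i him
      rcases lt_or_gt_of_ne him with hlt | hgt
      · rw [← ht, mem_XDes_take hmlt.le]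
        exact ⟨fun h => ⟨h, hlt⟩, fun h => h.1⟩
      · constructor
        · intro h
          have : i - m ∈ XDes X (w.drop m) := by
            rw [mem_XDes_drop]
            exact ⟨by omega, by rwa [show m + (i - m) = i by omega]⟩
          simp [hd] at this
        · intro h
          exact absurd (hJ i h) (by omega)
    by_cases hmem : m ∈ XDes X w
    · left
      ext i
      by_cases him : i = m
      · constructor
        · intro _
          rw [him]
          exact Finset.mem_insert_self m J
        · intro _
          rw [him]
          exact hmem
      · rw [hoff i him, Finset.mem_insert]
        exact ⟨fun h => Or.inr h, fun h => h.elim (fun h => absurd h him) id⟩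
    · right
      ext i
      by_cases him : i = m
      · constructor
        · intro hmemi
          exact absurd (him ▸ hmemi) hmem
        · intro hiJ
          exact absurd (hJ i hiJ) (by omega)
      · exact hoff i him
  · intro h
    have hoff : ∀ i, i ≠ m → (i ∈ XDes X w ↔ i ∈ J) := by
      intro i him
      rcases h with h | h <;> rw [h]
      simp [Finset.mem_insert, him]
    constructor
    · ext i
      rw [mem_XDes_take hmlt.le]
      constructor
      · rintro ⟨h1, h2⟩
        exact (hoff i (by omega)).mp h1
      · intro hiJ
        have := hJ i hiJ
        exact ⟨(hoff i (by omega)).mpr hiJ, this⟩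
    · ext i
      simp only [Finset.notMem_empty, iff_false]
      rw [mem_XDes_drop]
      rintro ⟨h1, h2⟩
      have := (hoff (m + i) (by omega)).mp h2
      exact absurd (hJ _ this) (by omega)

theorem stmt0 (X : Set (ℕ × ℕ)) (n : ℕ) (S : Finset ℕ) (hS : S.card = n)
    (I : Finset ℕ) (hI : I ⊆ Finset.Icc 1 (n - 1)) (hne : I.Nonempty) :
    (dX X I S : ℤ) =
      (∑ A ∈ S.powersetCard (I.max' hne),
        (dX X (I.erase (I.max' hne)) A : ℤ) * (dX X ∅ (S \ A) : ℤ))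
      - (dX X (I.erase (I.max' hne)) S : ℤ) := by
  classical
  set m := I.max' hne with hm
  set I' := I.erase m with hI'def
  have hmI : m ∈ I := I.max'_mem hne
  have hm1 : 1 ≤ m := (Finset.mem_Icc.mp (hI hmI)).1
  have hm2 : m ≤ n - 1 := (Finset.mem_Icc.mp (hI hmI)).2
  have hn2 : 2 ≤ n := by omega
  have hmn : m < n := by omega
  have hJlt : ∀ j ∈ I', j < m := by
    intro j hj
    have h1 := Finset.mem_erase.mp hj
    have h2 : j ≤ m := Finset.le_max' I j h1.2
    omega
  have hins : insert m I' = I := Finset.insert_erase hmI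
  have key : (Wst X I S).card + (Wst X I' S).card
      = ∑ A ∈ S.powersetCard m, (Wst X I' A).card * (Wst X ∅ (S \ A)).card := by
    have hdisj : Disjoint (Wst X I S) (Wst X I' S) := by
      rw [Finset.disjoint_left]
      intro w hw1 hw2
      have e1 := (mem_Wst.mp hw1).2.2
      have e2 := (mem_Wst.mp hw2).2.2
      have hmem : m ∈ I' := by rw [← e2, e1]; exact hmI
      exact (Finset.notMem_erase m I) hmem
    rw [← Finset.card_union_of_disjoint hdisj]
    have hrhs : ∑ A ∈ S.powersetCard m, (Wst X I' A).card * (Wst X ∅ (S \ A)).card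
        = ((S.powersetCard m).sigma (fun A => (Wst X I' A) ×ˢ (Wst X ∅ (S \ A)))).card := by
      rw [Finset.card_sigma]
      exact Finset.sum_congr rfl fun A _ => (Finset.card_product _ _).symm
    rw [hrhs]
    have hmemU : ∀ w, w ∈ Wst X I S ∪ Wst X I' S ↔
        w.Nodup ∧ w.toFinset = S ∧ (XDes X w = I ∨ XDes X w = I') := by
      intro w
      simp only [Finset.mem_union, mem_Wst]
      tauto
    apply Finset.card_bij' (fun w _ =>
        (⟨(w.take m).toFinset, (w.take m, w.drop m)⟩ : Σ _ : Finset ℕ, List ℕ × List ℕ))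
      (fun p _ => p.2.1 ++ p.2.2)
    · -- maps into sigma
      intro w hw
      obtain ⟨hnd, hts, hx⟩ := (hmemU w).mp hw
      have hlen : w.length = n := by
        rw [← hS, ← hts, List.toFinset_card_of_nodup hnd]
      have hmlt : m < w.length := by omega
      have hsplit : XDes X (w.take m) = I' ∧ XDes X (w.drop m) = ∅ := by
        rw [split_iff X hm1 hmlt hJlt, hins]
        exact hx
      have hndt : (w.take m).Nodup := (List.take_sublist m w).nodup hnd
      have hndd : (w.drop m).Nodup := (List.drop_sublist m w).nodup hnd
      have hcardA : (w.take m).toFinset.card = m := by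
        rw [List.toFinset_card_of_nodup hndt, List.length_take]
        omega
      have hsubA : (w.take m).toFinset ⊆ S := by
        intro a ha
        rw [← hts, List.mem_toFinset]
        exact (List.take_sublist m w).mem (List.mem_toFinset.mp ha)
      have hdisj2 : ∀ a, a ∈ (w.take m).toFinset → a ∉ (w.drop m).toFinset := by
        intro a ha hb
        have := List.nodup_append'.mp (by rwa [List.take_append_drop] : ((w.take m) ++ (w.drop m)).Nodup)
        exact this.2.2 (List.mem_toFinset.mp ha) (List.mem_toFinset.mp hb)
      have hdfin : (w.drop m).toFinset = S \ (w.take m).toFinset := by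
        ext a
        rw [Finset.mem_sdiff, ← hts]
        constructor
        · intro ha
          refine ⟨?_, fun hb => hdisj2 a hb ha⟩
          rw [List.mem_toFinset] at ha ⊢
          exact (List.drop_sublist m w).mem ha
        · rintro ⟨ha, hb⟩
          rw [List.mem_toFinset] at ha ⊢
          rcases (List.mem_append.mp (by rwa [List.take_append_drop] :
              a ∈ (w.take m) ++ (w.drop m))) with h | h
          · exact absurd (List.mem_toFinset.mpr h) hb
          · exact h
      rw [Finset.mem_sigma, Finset.mem_powersetCard, Finset.mem_product]
      refine ⟨⟨hsubA, hcardA⟩, ?_, ?_⟩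
      · exact mem_Wst.mpr ⟨hndt, rfl, hsplit.1⟩
      · exact mem_Wst.mpr ⟨hndd, hdfin, hsplit.2⟩
    · -- maps back into union
      intro p hp
      obtain ⟨A, u, v⟩ := p
      simp only [Finset.mem_sigma, Finset.mem_powersetCard, Finset.mem_product] at hp
      obtain ⟨⟨hAS, hAc⟩, hu, hv⟩ := hp
      obtain ⟨hund, huts, hux⟩ := mem_Wst.mp hu
      obtain ⟨hvnd, hvts, hvx⟩ := mem_Wst.mp hv
      have hulen : u.length = m := by
        rw [← List.toFinset_card_of_nodup hund, huts, hAc]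
      have hvlen : v.length = n - m := by
        rw [← List.toFinset_card_of_nodup hvnd, hvts, Finset.card_sdiff_of_subset hAS, hS, hAc]
      have hwnd : (u ++ v).Nodup := by
        rw [List.nodup_append']
        refine ⟨hund, hvnd, fun a ha hb => ?_⟩
        have h1 : a ∈ A := by rw [← huts]; exact List.mem_toFinset.mpr ha
        have h2 : a ∈ S \ A := by rw [← hvts]; exact List.mem_toFinset.mpr hb
        exact (Finset.mem_sdiff.mp h2).2 h1
      have hwts : (u ++ v).toFinset = S := by
        rw [List.toFinset_append, huts, hvts, Finset.union_sdiff_of_subset hAS]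
      have hwlen : (u ++ v).length = n := by
        rw [List.length_append, hulen, hvlen]; omega
      have htake : (u ++ v).take m = u := by
        rw [← hulen, List.take_left]
      have hdrop : (u ++ v).drop m = v := by
        rw [← hulen, List.drop_left]
      have hx : XDes X (u ++ v) = I ∨ XDes X (u ++ v) = I' := by
        rw [← hins]
        rw [← split_iff X hm1 (by omega : m < (u ++ v).length) hJlt]
        rw [htake, hdrop]
        exact ⟨hux, hvx⟩
      exact (hmemU _).mpr ⟨hwnd, hwts, hx⟩
    · -- left inverse
      intro w hw
      simp only [List.take_append_drop]
    · -- right inverse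
      intro p hp
      obtain ⟨A, u, v⟩ := p
      simp only [Finset.mem_sigma, Finset.mem_powersetCard, Finset.mem_product] at hp
      obtain ⟨⟨hAS, hAc⟩, hu, hv⟩ := hp
      obtain ⟨hund, huts, _⟩ := mem_Wst.mp hu
      have hulen : u.length = m := by
        rw [← List.toFinset_card_of_nodup hund, huts, hAc]
      have htake : (u ++ v).take m = u := by
        rw [← hulen, List.take_left]
      have hdrop : (u ++ v).drop m = v := by
        rw [← hulen, List.drop_left]
      simp only [htake, hdrop, huts]
  have keyZ : ((dX X I S : ℤ)) + (dX X I' S : ℤ)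
      = ∑ A ∈ S.powersetCard m, (dX X I' A : ℤ) * (dX X ∅ (S \ A) : ℤ) := by
    have : (dX X I S) + dX X I' S
        = ∑ A ∈ S.powersetCard m, dX X I' A * dX X ∅ (S \ A) := by
      simp only [dX_eq_card]
      exact key
    exact_mod_cast congrArg (Nat.cast : ℕ → ℤ) this
  linarith [keyZ]
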